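/- arXiv:1212.1913 — 4 statements merged into one kernel-verified Lean document; each statement's English description precedes it below -/
import Mathlib

section
/- Let f : {0,1,…,n} → ℝ be completely monotonic, let a_1, …, a_r be distinct elements of {0,1,…,n}, and let p be the unique real polynomial of degree less than r such that p(a_i) = f(a_i) for i = 1,…,r. Then p admits an expansion p(x) = Σ_{j=0}^{r−1} c_j Π_{i=1}^{j} (a_i − x) in which all coefficients c_0, c_1, …, c_{r−1} are nonnegative. -/
open Finset

/-- The Krawtchouk polynomial `K_k(x; n, q)` evaluated at a natural number `x`. -/
noncomputable def kraw (n q k x : ℕ) : ℝ :=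
  ∑ j ∈ Finset.range (k+1),
    (-1 : ℝ)^j * ((q : ℝ) - 1)^(k-j) * (x.choose j : ℝ) * ((n-x).choose (k-j) : ℝ)

/-- The finite difference operator `Δf(m) = f(m+1) − f(m)`. -/
def fdiff (f : ℕ → ℝ) : ℕ → ℝ := fun m => f (m+1) - f m

/-- `f` is completely monotonic on `{a, a+1, …, b}`:
`(−1)^k Δ^k f(i) ≥ 0` whenever `k ≥ 0` and `a ≤ i ≤ b − k`. -/
def CompletelyMonotonicOn (f : ℕ → ℝ) (a b : ℕ) : Prop :=
  ∀ k i, a ≤ i → i + k ≤ b → 0 ≤ (-1 : ℝ)^k * (fdiff^[k] f) i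


noncomputable def dd (f : ℕ → ℝ) (s : Finset ℕ) : ℝ :=
  ∑ x ∈ s, f x / ∏ y ∈ s.erase x, ((x : ℝ) - y)

lemma ddA (f : ℕ → ℝ) {s : Finset ℕ} {u : ℕ} (hu : u ∈ s) :
    dd f (s.erase u) = ∑ x ∈ s, ((x : ℝ) - u) * (f x / ∏ y ∈ s.erase x, ((x : ℝ) - y)) := by
  rw [← Finset.add_sum_erase _ _ hu, sub_self, zero_mul, zero_add]
  unfold dd
  refine Finset.sum_congr rfl fun x hx => ?_
  obtain ⟨hxu, hxs⟩ := Finset.mem_erase.mp hx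
  have hus : u ∈ s.erase x := Finset.mem_erase.mpr ⟨Ne.symm hxu, hu⟩
  have hP : ∏ y ∈ s.erase x, ((x : ℝ) - y)
      = ((x : ℝ) - u) * ∏ y ∈ (s.erase x).erase u, ((x : ℝ) - y) :=
    (Finset.mul_prod_erase _ _ hus).symm
  have hxu' : ((x : ℝ) - u) ≠ 0 := by
    simpa [sub_eq_zero] using hxu
  rw [Finset.erase_right_comm, hP]
  rw [mul_div_assoc', mul_div_mul_left _ _ hxu']

/-- Divided differences satisfy the standard recurrence. -/
lemma dd_singleton (f : ℕ → ℝ) (x : ℕ) : dd f {x} = f x := by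
  simp [dd]

lemma dd_rec (f : ℕ → ℝ) {s : Finset ℕ} {u v : ℕ} (hu : u ∈ s) (hv : v ∈ s) (huv : u ≠ v) :
    dd f (s.erase u) - dd f (s.erase v) = ((v : ℝ) - u) * dd f s := by
  rw [ddA f hu, ddA f hv, ← Finset.sum_sub_distrib, dd, Finset.mul_sum]
  exact Finset.sum_congr rfl fun x _ => by ring

lemma prod_range_sub_eq_factorial (i : ℕ) : ∏ j ∈ Finset.range i, (i - j) = Nat.factorial i := by
  rw [← Nat.descFactorial_eq_prod_range, Nat.descFactorial_self]

lemma prod_erase_range (k i : ℕ) (hi : i < k + 1) :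
    ∏ j ∈ (Finset.range (k+1)).erase i, ((i : ℝ) - j)
      = (-1 : ℝ)^(k - i) * (Nat.factorial i) * (Nat.factorial (k - i)) := by
  have hsplit : (Finset.range (k+1)).erase i = Finset.range i ∪ Finset.Ico (i+1) (k+1) := by
    ext j
    simp only [Finset.mem_erase, Finset.mem_range, Finset.mem_union, Finset.mem_Ico]
    omega
  have hdisj : Disjoint (Finset.range i) (Finset.Ico (i+1) (k+1)) := by
    rw [Finset.disjoint_left]
    intro j hj hj'
    simp only [Finset.mem_range] at hj
    simp only [Finset.mem_Ico] at hj'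
    omega
  rw [hsplit, Finset.prod_union hdisj]
  have h1 : ∏ j ∈ Finset.range i, ((i : ℝ) - j) = (Nat.factorial i : ℝ) := by
    rw [← prod_range_sub_eq_factorial i]
    push_cast
    refine Finset.prod_congr rfl fun j hj => ?_
    rw [Nat.cast_sub (Finset.mem_range.mp hj).le]
  have h2 : ∏ j ∈ Finset.Ico (i+1) (k+1), ((i : ℝ) - j)
      = (-1 : ℝ)^(k - i) * (Nat.factorial (k - i)) := by
    have himg : Finset.Ico (i+1) (k+1) = (Finset.range (k - i)).image (fun t => i + 1 + t) := by
      ext j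
      simp only [Finset.mem_Ico, Finset.mem_image, Finset.mem_range]
      constructor
      · intro h; exact ⟨j - (i+1), by omega, by omega⟩
      · rintro ⟨t, ht, rfl⟩; omega
    rw [himg, Finset.prod_image (by intro x _ y _ h; simp only at h; omega)]
    have : ∀ t ∈ Finset.range (k - i), ((i : ℝ) - (i + 1 + t : ℕ)) = (-1) * ((t + 1 : ℕ) : ℝ) := by
      intro t _; push_cast; ring
    rw [Finset.prod_congr rfl this, Finset.prod_mul_distrib, Finset.prod_const,
      Finset.card_range]
    congr 1
    rw [← Nat.cast_prod]
    norm_cast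
    exact Finset.prod_range_add_one_eq_factorial _
  rw [h1, h2]; ring

lemma fdiff_eq_fwdDiff : fdiff = fwdDiff (1 : ℕ) := rfl

lemma fdiff_iter_eq (f : ℕ → ℝ) (k m : ℕ) :
    (fdiff^[k] f) m = ∑ i ∈ Finset.range (k+1),
      (-1 : ℝ)^(k - i) * (Nat.choose k i) * f (m + i) := by
  rw [fdiff_eq_fwdDiff, fwdDiff_iter_eq_sum_shift]
  refine Finset.sum_congr rfl fun i _ => ?_
  simp only [smul_eq_mul, mul_one, zsmul_eq_mul]
  push_cast
  ring

lemma dd_Icc (f : ℕ → ℝ) (m k : ℕ) :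
    (Nat.factorial k : ℝ) * dd f (Finset.Icc m (m + k)) = (fdiff^[k] f) m := by
  have hinj : Function.Injective (fun i : ℕ => m + i) := fun x y h => by simpa using h
  have himg : Finset.Icc m (m+k) = (Finset.range (k+1)).image (fun i => m + i) := by
    ext j
    simp only [Finset.mem_Icc, Finset.mem_image, Finset.mem_range]
    constructor
    · intro h; exact ⟨j - m, by omega, by omega⟩
    · rintro ⟨t, ht, rfl⟩; omega
  rw [dd, himg, Finset.sum_image (fun x _ y _ h => hinj h)]
  have hterm : ∀ i ∈ Finset.range (k+1),
      f (m+i) / ∏ y ∈ (((Finset.range (k+1)).image (fun i => m+i)).erase (m+i)), (((m+i:ℕ):ℝ) - y)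
      = (-1:ℝ)^(k-i) * (Nat.choose k i) * f (m+i) / (Nat.factorial k) := by
    intro i hi
    have hik : i < k + 1 := Finset.mem_range.mp hi
    rw [← Finset.image_erase hinj, Finset.prod_image (fun x _ y _ h => hinj h)]
    have hc : ∀ j ∈ (Finset.range (k+1)).erase i, (((m+i:ℕ):ℝ) - ((m+j:ℕ):ℝ)) = (i:ℝ) - j := by
      intro j _; push_cast; ring
    rw [Finset.prod_congr rfl hc, prod_erase_range k i hik]
    have hkf : (Nat.factorial k : ℝ)
        = (Nat.choose k i) * (Nat.factorial i) * (Nat.factorial (k-i)) := by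
      exact_mod_cast (Nat.choose_mul_factorial_mul_factorial (by omega : i ≤ k)).symm
    have hsq : (-1:ℝ)^(k-i) * (-1:ℝ)^(k-i) = 1 := by rw [← mul_pow]; norm_num
    have h1 : ((-1:ℝ)^(k-i)) ≠ 0 := by positivity
    have h2 : (Nat.factorial i : ℝ) ≠ 0 := by positivity
    have h3 : (Nat.factorial (k-i) : ℝ) ≠ 0 := by positivity
    have h4 : (Nat.factorial k : ℝ) ≠ 0 := by positivity
    generalize hg : (-1:ℝ)^(k-i) = sg at hsq h1 ⊢
    rw [div_eq_div_iff (by simp [h1, h2, h3, mul_ne_zero]) h4, hkf]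
    linear_combination (-(1:ℝ) * (Nat.choose k i : ℝ) * (Nat.factorial i) * (Nat.factorial (k-i)) * f (m+i)) * hsq
  rw [Finset.sum_congr rfl hterm, ← Finset.sum_div, fdiff_iter_eq,
    mul_div_cancel₀ _ (by positivity : (Nat.factorial k:ℝ) ≠ 0)]

lemma dd_sign {f : ℕ → ℝ} {n : ℕ} (hf : CompletelyMonotonicOn f 0 n) :
    ∀ d k (s : Finset ℕ) (hs : s.Nonempty), s.card = k + 1 → (∀ x ∈ s, x ≤ n) →
      s.max' hs - s.min' hs = d → 0 ≤ (-1 : ℝ)^k * dd f s := by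
  intro d
  induction d using Nat.strong_induction_on with
  | _ d IH =>
  intro k s hs hcard hbd hspan
  set m := s.min' hs with hm
  set M := s.max' hs with hM
  have hms : m ∈ s := s.min'_mem hs
  have hMs : M ∈ s := s.max'_mem hs
  have hmM : m ≤ M := s.min'_le _ hMs
  have hMn : M ≤ n := hbd _ hMs
  have hsub : s ⊆ Finset.Icc m M := fun x hx =>
    Finset.mem_Icc.mpr ⟨s.min'_le _ hx, s.le_max' _ hx⟩
  have hkd : k ≤ d := by
    have := Finset.card_le_card hsub
    rw [hcard, Nat.card_Icc] at this
    omega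
  rcases eq_or_lt_of_le hkd with hdk | hdk
  · -- consecutive case : s = Icc m (m+k)
    have hMk : M = m + k := by omega
    have hIcc : s = Finset.Icc m (m + k) := by
      refine Finset.eq_of_subset_of_card_le (hMk ▸ hsub) ?_
      rw [Nat.card_Icc, hcard]; omega
    have h0 := hf k m (Nat.zero_le _) (by omega)
    have hfac : (0:ℝ) < (Nat.factorial k : ℝ) := by positivity
    have hdd : dd f (Finset.Icc m (m+k)) = (fdiff^[k] f) m / (Nat.factorial k : ℝ) := by
      rw [eq_div_iff hfac.ne', mul_comm]; exact dd_Icc f m k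
    rw [hIcc, hdd, mul_div_assoc']
    exact div_nonneg h0 hfac.le
  · -- gap case
    have hmMlt : m < M := by omega
    -- find a gap point y
    have hgap : ∃ y, m < y ∧ y < M ∧ y ∉ s := by
      by_contra hc
      push_neg at hc
      have hIsub : Finset.Icc m M ⊆ s := by
        intro x hx
        rw [Finset.mem_Icc] at hx
        rcases eq_or_lt_of_le hx.1 with h1 | h1
        · exact h1 ▸ hms
        rcases eq_or_lt_of_le hx.2 with h2 | h2
        · exact h2 ▸ hMs
        · exact hc x h1 h2
      have := Finset.card_le_card hIsub
      rw [Nat.card_Icc, hcard] at this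
      omega
    obtain ⟨y, hmy, hyM, hys⟩ := hgap
    set S := insert y s with hS
    have hyS : y ∈ S := Finset.mem_insert_self _ _
    have hmS : m ∈ S := Finset.mem_insert_of_mem hms
    have hMS : M ∈ S := Finset.mem_insert_of_mem hMs
    have hSy : S.erase y = s := Finset.erase_insert hys
    have hScard : S.card = k + 2 := by rw [hS, Finset.card_insert_of_notMem hys, hcard]
    have h1 := dd_rec f hmS hyS (by omega)
    have h2 := dd_rec f hMS hyS (by omega)
    rw [hSy] at h1 h2
    set A := dd f (S.erase m) with hA
    set B := dd f (S.erase M) with hB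
    have key : ((M:ℝ) - m) * dd f s = ((M:ℝ) - y) * A + ((y:ℝ) - m) * B := by
      linear_combination ((y:ℝ) - M) * h1 + ((m:ℝ) - y) * h2
    -- bounds and spans for the two smaller sets
    have hmemSm : ∀ x ∈ S.erase m, (x ∈ s ∨ x = y) ∧ m + 1 ≤ x ∧ x ≤ M := by
      intro x hx
      obtain ⟨hxm, hxS⟩ := Finset.mem_erase.mp hx
      rcases Finset.mem_insert.mp hxS with rfl | hxs
      · exact ⟨Or.inr rfl, by omega, by omega⟩
      · have := s.min'_le _ hxs
        have := s.le_max' _ hxs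
        exact ⟨Or.inl hxs, by omega, by omega⟩
    have hmemSM : ∀ x ∈ S.erase M, (x ∈ s ∨ x = y) ∧ m ≤ x ∧ x ≤ M - 1 := by
      intro x hx
      obtain ⟨hxM, hxS⟩ := Finset.mem_erase.mp hx
      rcases Finset.mem_insert.mp hxS with rfl | hxs
      · exact ⟨Or.inr rfl, by omega, by omega⟩
      · have := s.min'_le _ hxs
        have := s.le_max' _ hxs
        exact ⟨Or.inl hxs, by omega, by omega⟩
    have hSmcard : (S.erase m).card = k + 1 := by
      rw [Finset.card_erase_of_mem hmS, hScard]; omega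
    have hSMcard : (S.erase M).card = k + 1 := by
      rw [Finset.card_erase_of_mem hMS, hScard]; omega
    have hSmne : (S.erase m).Nonempty := Finset.card_pos.mp (by omega)
    have hSMne : (S.erase M).Nonempty := Finset.card_pos.mp (by omega)
    have hAnn : 0 ≤ (-1:ℝ)^k * A := by
      refine IH _ ?_ k _ hSmne hSmcard ?_ rfl
      · -- span < d
        have hmax := Finset.max'_mem _ hSmne
        have hmin := Finset.min'_mem _ hSmne
        have h1' := (hmemSm _ hmax).2.2
        have h2' := (hmemSm _ hmin).2.1
        omega
      · intro x hx
        rcases (hmemSm x hx).1 with h | rfl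
        · exact hbd x h
        · omega
    have hBnn : 0 ≤ (-1:ℝ)^k * B := by
      refine IH _ ?_ k _ hSMne hSMcard ?_ rfl
      · have hmax := Finset.max'_mem _ hSMne
        have hmin := Finset.min'_mem _ hSMne
        have h1' := (hmemSM _ hmax).2.2
        have h2' := (hmemSM _ hmin).2.1
        omega
      · intro x hx
        rcases (hmemSM x hx).1 with h | rfl
        · exact hbd x h
        · omega
    have hMm : (0:ℝ) < (M:ℝ) - m := by
      have : (m:ℝ) < M := by exact_mod_cast hmMlt
      linarith
    have hMy : (0:ℝ) ≤ (M:ℝ) - y := by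
      have : (y:ℝ) ≤ M := by exact_mod_cast hyM.le
      linarith
    have hym : (0:ℝ) ≤ (y:ℝ) - m := by
      have : (m:ℝ) ≤ y := by exact_mod_cast hmy.le
      linarith
    have hmain : ((M:ℝ) - m) * ((-1:ℝ)^k * dd f s)
        = ((M:ℝ) - y) * ((-1:ℝ)^k * A) + ((y:ℝ) - m) * ((-1:ℝ)^k * B) := by
      linear_combination ((-1:ℝ)^k) * key
    have hrhs : 0 ≤ ((M:ℝ) - y) * ((-1:ℝ)^k * A) + ((y:ℝ) - m) * ((-1:ℝ)^k * B) :=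
      add_nonneg (mul_nonneg hMy hAnn) (mul_nonneg hym hBnn)
    nlinarith [hmain, hrhs, hMm]

lemma newton_error (f : ℕ → ℝ) (a : ℕ → ℕ) (r : ℕ)
    (hinj : ∀ i, i < r → ∀ j, j < r → a i = a j → i = j) :
    ∀ m, m ≤ r → ∀ t, m ≤ t → t < r →
    f (a t) - ∑ j ∈ Finset.range m, dd f ((Finset.range (j+1)).image a)
        * ∏ i ∈ Finset.range j, ((a t : ℝ) - a i)
      = dd f (insert (a t) ((Finset.range m).image a))
        * ∏ i ∈ Finset.range m, ((a t : ℝ) - a i) := by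
  intro m
  induction m with
  | zero => intro _ t _ _; simp [dd_singleton]
  | succ m ih =>
    intro hm t htm htr
    have ihe := ih (by omega) t (by omega) htr
    have hat_ne : a m ≠ a t := fun h => by
      have := hinj m (by omega) t htr h; omega
    have hamNm : a m ∉ (Finset.range m).image a := by
      simp only [Finset.mem_image, Finset.mem_range]
      rintro ⟨i, hi, hie⟩
      have := hinj i (by omega) m (by omega) hie; omega
    have hatNm1 : a t ∉ (Finset.range (m+1)).image a := by
      simp only [Finset.mem_image, Finset.mem_range]
      rintro ⟨i, hi, hie⟩
      have := hinj i (by omega) t htr hie; omega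
    have hNm1 : (Finset.range (m+1)).image a = insert (a m) ((Finset.range m).image a) := by
      rw [Finset.range_add_one, Finset.image_insert]
    have hu : a m ∈ insert (a t) ((Finset.range (m+1)).image a) := by
      rw [hNm1]; exact Finset.mem_insert_of_mem (Finset.mem_insert_self _ _)
    have hv : a t ∈ insert (a t) ((Finset.range (m+1)).image a) :=
      Finset.mem_insert_self _ _
    have hSm : (insert (a t) ((Finset.range (m+1)).image a)).erase (a m)
        = insert (a t) ((Finset.range m).image a) := by
      rw [hNm1, Finset.insert_comm, Finset.erase_insert]
      simp only [Finset.mem_insert]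
      rintro (h | h)
      exacts [hat_ne h, hamNm h]
    have hSt : (insert (a t) ((Finset.range (m+1)).image a)).erase (a t)
        = (Finset.range (m+1)).image a := Finset.erase_insert hatNm1
    have hrec := dd_rec f hu hv hat_ne
    rw [hSm, hSt] at hrec
    rw [Finset.sum_range_succ, Finset.prod_range_succ]
    linear_combination ihe + (∏ i ∈ Finset.range m, ((a t:ℝ) - a i)) * hrec

lemma newton_interp (f : ℕ → ℝ) (a : ℕ → ℕ) (r : ℕ)
    (hinj : ∀ i, i < r → ∀ j, j < r → a i = a j → i = j)
    (t : ℕ) (htr : t < r) :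
    ∑ j ∈ Finset.range r, dd f ((Finset.range (j+1)).image a)
        * ∏ i ∈ Finset.range j, ((a t : ℝ) - a i) = f (a t) := by
  have herr := newton_error f a r hinj t (by omega) t le_rfl htr
  have hins : insert (a t) ((Finset.range t).image a) = (Finset.range (t+1)).image a := by
    rw [Finset.range_add_one, Finset.image_insert]
  rw [hins] at herr
  have hsub : Finset.range (t+1) ⊆ Finset.range r := Finset.range_subset_range.mpr (by omega)
  rw [← Finset.sum_subset hsub (fun j hj hj' => ?_)]
  · rw [Finset.sum_range_succ]
    linear_combination -herr
  · have htj : t < j := by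
      simp only [Finset.mem_range] at hj hj'; omega
    rw [Finset.prod_eq_zero (Finset.mem_range.mpr htj) (by simp), mul_zero]

/-- Lemma 4.9, expansion (14): with `f` completely
monotonic on `{0,…,n}`, the `a i` (for `i < r`) distinct in `{0,…,n}`, and
`p` the polynomial of degree `< r` interpolating `f` at the `a i`, the
polynomial `p` expands as `p(x) = ∑_{j=0}^{r−1} c_j ∏_{i=1}^{j} (a_i − x)`
with all coefficients `c_j ≥ 0`. -/
theorem interpolation_nonneg_coeffs {n r : ℕ} (f : ℕ → ℝ)
    (hf : CompletelyMonotonicOn f 0 n)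
    (a : ℕ → ℕ) (ha : ∀ i, i < r → a i ≤ n)
    (hinj : ∀ i, i < r → ∀ j, j < r → a i = a j → i = j)
    (p : Polynomial ℝ) (hdeg : p.degree < (r : WithBot ℕ))
    (hp : ∀ i, i < r → p.eval ((a i : ℝ)) = f (a i)) :
    ∃ c : ℕ → ℝ, (∀ j, j < r → 0 ≤ c j) ∧
      ∀ x : ℝ, p.eval x = ∑ j ∈ Finset.range r, c j * ∏ i ∈ Finset.range j, ((a i : ℝ) - x) := by
  classical
  set c' : ℕ → ℝ := fun j => dd f ((Finset.range (j+1)).image a) with hc'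
  refine ⟨fun j => (-1:ℝ)^j * c' j, ?_, ?_⟩
  · intro j hj
    have hcard : ((Finset.range (j+1)).image a).card = j + 1 := by
      rw [Finset.card_image_of_injOn, Finset.card_range]
      intro x hx y hy hxy
      exact hinj x (by simp at hx; omega) y (by simp at hy; omega) hxy
    have hne : ((Finset.range (j+1)).image a).Nonempty :=
      Finset.card_pos.mp (by omega)
    have hbd : ∀ x ∈ (Finset.range (j+1)).image a, x ≤ n := by
      intro x hx
      obtain ⟨i, hi, rfl⟩ := Finset.mem_image.mp hx
      exact ha i (by simp at hi; omega)
    exact dd_sign hf _ j _ hne hcard hbd rfl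
  · -- eval identity
    set q : Polynomial ℝ := ∑ j ∈ Finset.range r,
      Polynomial.C (c' j) * ∏ i ∈ Finset.range j, (Polynomial.X - Polynomial.C ((a i : ℝ))) with hq
    have hqeval : ∀ x : ℝ, q.eval x
        = ∑ j ∈ Finset.range r, c' j * ∏ i ∈ Finset.range j, (x - (a i : ℝ)) := by
      intro x
      rw [hq, Polynomial.eval_finset_sum]
      refine Finset.sum_congr rfl fun j _ => ?_
      rw [Polynomial.eval_mul, Polynomial.eval_C, Polynomial.eval_prod]
      simp
    have hqdeg : q.degree < (r : WithBot ℕ) := by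
      rcases Nat.eq_zero_or_pos r with rfl | hr
      · simp [hq]
      refine lt_of_le_of_lt (Polynomial.degree_sum_le _ _) ?_
      rw [Finset.sup_lt_iff (by exact_mod_cast WithBot.bot_lt_coe r)]
      intro j hj
      refine lt_of_le_of_lt (Polynomial.degree_mul_le _ _) ?_
      have h1 : (Polynomial.C (c' j)).degree ≤ 0 := Polynomial.degree_C_le
      have h2 : (∏ i ∈ Finset.range j, (Polynomial.X - Polynomial.C ((a i : ℝ)))).degree
          ≤ (j : WithBot ℕ) := by
        refine le_trans (Polynomial.degree_prod_le _ _) ?_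
        simp only [Polynomial.degree_X_sub_C]
        rw [Finset.sum_const, Finset.card_range]
        simp
      calc (Polynomial.C (c' j)).degree
            + (∏ i ∈ Finset.range j, (Polynomial.X - Polynomial.C ((a i : ℝ)))).degree
          ≤ 0 + (j : WithBot ℕ) := add_le_add h1 h2
        _ = (j : WithBot ℕ) := by rw [zero_add]
        _ < (r : WithBot ℕ) := by exact_mod_cast Finset.mem_range.mp hj
    have hpq : p = q := by
      have hvs : Set.InjOn (fun i => ((a i : ℕ) : ℝ)) (Finset.range r) := by
        intro x hx y hy hxy
        simp only [Finset.coe_range, Set.mem_Iio] at hx hy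
        exact hinj x hx y hy (Nat.cast_injective hxy)
      refine Polynomial.eq_of_degrees_lt_of_eval_index_eq (Finset.range r) hvs ?_ ?_ ?_
      · rwa [Finset.card_range]
      · rwa [Finset.card_range]
      · intro i hi
        have hir : i < r := Finset.mem_range.mp hi
        rw [hp i hir, hqeval]
        exact (newton_interp f a r hinj i hir).symm
    intro x
    rw [hpq, hqeval x]
    refine Finset.sum_congr rfl fun j _ => ?_
    have hprod : ∏ i ∈ Finset.range j, ((a i : ℝ) - x)
        = (-1:ℝ)^j * ∏ i ∈ Finset.range j, (x - (a i : ℝ)) := by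
      calc ∏ i ∈ Finset.range j, ((a i:ℝ) - x)
          = ∏ i ∈ Finset.range j, (-1) * (x - (a i:ℝ)) :=
            Finset.prod_congr rfl fun i _ => by ring
        _ = (-1:ℝ)^j * ∏ i ∈ Finset.range j, (x - (a i:ℝ)) := by
            rw [Finset.prod_mul_distrib, Finset.prod_const, Finset.card_range]
    have hsq : (-1:ℝ)^j * (-1:ℝ)^j = 1 := by rw [← mul_pow]; norm_num
    rw [hprod, mul_mul_mul_comm, hsq, one_mul]
end

section
/- Let q ≥ 2, n ≥ 1, and let 𝐚 be a quasicode of length n over an alphabet of size q. Suppose 𝐚 is a 1-design and its support consists either of a single integer or of two consecutive integers. Then 𝐚 is a universally optimal quasicode. -/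
open Finset

/-- A quasicode of length `n` and size `N` over an alphabet of size `q`,
recorded via its entries `A 0, …, A n`. -/
structure IsQuasicode (q n : ℕ) (N : ℝ) (A : ℕ → ℝ) : Prop where
  nonneg : ∀ i, i ≤ n → 0 ≤ A i
  delsarte : ∀ j, j ≤ n → 0 ≤ ∑ i ∈ Finset.range (n+1), A i * kraw n q j i
  size : ∑ i ∈ Finset.range (n+1), A i = N
  zeroth : A 0 = 1

/-- A universally optimal quasicode: a quasicode that minimizes `f`-energy
among all quasicodes of the same length and size, for every completely
monotonic potential function `f`. -/
def IsUOQuasicode (q n : ℕ) (N : ℝ) (A : ℕ → ℝ) : Prop :=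
  IsQuasicode q n N A ∧
    ∀ f : ℕ → ℝ, CompletelyMonotonicOn f 0 n →
      ∀ B : ℕ → ℝ, IsQuasicode q n N B →
        ∑ i ∈ Finset.range (n+1), f i * A i ≤ ∑ i ∈ Finset.range (n+1), f i * B i

/-- The quasicode `A` (of size `N`) is a `t`-design: `A^⊥_j = 0` for `1 ≤ j ≤ t`. -/
def IsDesign (q n t : ℕ) (A : ℕ → ℝ) : Prop :=
  ∀ j, 1 ≤ j → j ≤ t → ∑ i ∈ Finset.range (n+1), A i * kraw n q j i = 0

/-- `h : {0,…,n} → ℝ` is positive definite: its (unique) Krawtchouk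
coefficients are all nonnegative. -/
def PositiveDefinite (q n : ℕ) (h : ℕ → ℝ) : Prop :=
  ∃ c : ℕ → ℝ, (∀ j, j ≤ n → 0 ≤ c j) ∧
    ∀ i, i ≤ n → h i = ∑ j ∈ Finset.range (n+1), c j * kraw n q j i

open scoped Classical in
/-- The support of a quasicode: `{i > 0 : A i ≠ 0}`. -/
noncomputable def supp (n : ℕ) (A : ℕ → ℝ) : Finset ℕ :=
  (Finset.Icc 1 n).filter (fun i => A i ≠ 0)

lemma kraw_one' {n q i : ℕ} (hi : i ≤ n) :
    kraw n q 1 i = ((q:ℝ) - 1) * n - q * i := by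
  simp [kraw, Finset.sum_range_succ, Nat.choose_one_right]
  rw [Nat.cast_sub hi]
  ring

lemma cm_step' {f : ℕ → ℝ} {n : ℕ} (hf : CompletelyMonotonicOn f 0 n) {i : ℕ}
    (h : i + 1 ≤ n) : f (i+1) ≤ f i := by
  have := hf 1 i (Nat.zero_le _) h
  simp [fdiff] at this
  linarith

lemma cm_anti' {f : ℕ → ℝ} {n : ℕ} (hf : CompletelyMonotonicOn f 0 n) {i j : ℕ}
    (hij : i ≤ j) (hj : j ≤ n) : f j ≤ f i := by
  induction j, hij using Nat.le_induction with
  | base => exact le_refl _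
  | succ j hij ih => exact le_trans (cm_step' hf hj) (ih (by omega))

lemma cm_convex' {f : ℕ → ℝ} {n : ℕ} (hf : CompletelyMonotonicOn f 0 n) {i : ℕ}
    (h : i + 2 ≤ n) : fdiff f i ≤ fdiff f (i+1) := by
  have := hf 2 i (Nat.zero_le _) h
  simp [fdiff, Function.iterate_succ, Function.comp] at this
  simp [fdiff]
  linarith

lemma cm_slope' {f : ℕ → ℝ} {n : ℕ} (hf : CompletelyMonotonicOn f 0 n) {i j : ℕ}
    (hij : i ≤ j) (hj : j + 1 ≤ n) : fdiff f i ≤ fdiff f j := by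
  induction j, hij using Nat.le_induction with
  | base => exact le_refl _
  | succ j hij ih => exact le_trans (ih (by omega)) (cm_convex' hf (by omega))

lemma cm_chord' {f : ℕ → ℝ} {n a : ℕ} (hf : CompletelyMonotonicOn f 0 n)
    (ha : a + 1 ≤ n) : ∀ x ≤ n, f a + (f (a+1) - f a) * ((x:ℝ) - a) ≤ f x := by
  set β := f (a+1) - f a with hβ
  have hb : β = fdiff f a := rfl
  have up : ∀ d : ℕ, a + d ≤ n → f a + β * d ≤ f (a + d) := by
    intro d
    induction d with
    | zero => intro _; simp
    | succ d ih =>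
        intro hd
        have h1 : β ≤ fdiff f (a + d) := hb ▸ cm_slope' hf (Nat.le_add_right a d) (by omega)
        have h2 := ih (by omega)
        have h3 : f (a + (d+1)) = f (a + d) + fdiff f (a + d) := by
          show _ = _ + (f (a + d + 1) - f (a + d))
          rw [show a + (d+1) = a + d + 1 by omega]
          ring
        rw [h3]
        push_cast
        linarith
  have down : ∀ d : ℕ, d ≤ a → f a - β * d ≤ f (a - d) := by
    intro d
    induction d with
    | zero => intro _; simp
    | succ d ih =>
        intro hd
        have hm : a - d = (a - (d+1)) + 1 := by omega
        have h1 : fdiff f (a - (d+1)) ≤ β := hb ▸ cm_slope' hf (by omega) (by omega)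
        have h2 := ih (by omega)
        have h3 : f (a - (d+1)) = f (a - d) - fdiff f (a - (d+1)) := by
          rw [hm]; simp [fdiff]
        rw [h3]
        push_cast
        linarith
  intro x hx
  rcases le_or_gt x a with h | h
  · have hd := down (a - x) (Nat.sub_le a x)
    rw [show a - (a - x) = x by omega] at hd
    rw [Nat.cast_sub h] at hd
    linarith
  · have hu := up (x - a) (by omega)
    rw [show a + (x - a) = x by omega] at hu
    rw [Nat.cast_sub (le_of_lt h)] at hu
    linarith

lemma lp_aux' {q n : ℕ} (hq : 2 ≤ q) (hn : 1 ≤ n) {N : ℝ} {A : ℕ → ℝ}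
    (hA : IsQuasicode q n N A) (hdesign : IsDesign q n 1 A)
    {f : ℕ → ℝ} {α β : ℝ} (hβ : β ≤ 0)
    (hle : ∀ x, x ≤ n → α + β * x ≤ f x)
    (heq : ∀ i, 1 ≤ i → i ≤ n → A i ≠ 0 → α + β * i = f i)
    {B : ℕ → ℝ} (hB : IsQuasicode q n N B) :
    ∑ i ∈ Finset.range (n+1), f i * A i ≤ ∑ i ∈ Finset.range (n+1), f i * B i := by
  have hq' : (2:ℝ) ≤ (q:ℝ) := by exact_mod_cast hq
  have split : ∀ C : ℕ → ℝ, ∑ i ∈ Finset.range (n+1), f i * C i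
      = ∑ i ∈ Finset.range (n+1), (f i - (α + β * i)) * C i
        + (α * (∑ i ∈ Finset.range (n+1), C i)
           + β * ∑ i ∈ Finset.range (n+1), (i:ℝ) * C i) := by
    intro C
    rw [Finset.mul_sum, Finset.mul_sum, ← Finset.sum_add_distrib, ← Finset.sum_add_distrib]
    exact Finset.sum_congr rfl fun i _ => by ring
  have krw : ∀ C : ℕ → ℝ, ∑ i ∈ Finset.range (n+1), C i * kraw n q 1 i
      = ((q:ℝ)-1) * n * (∑ i ∈ Finset.range (n+1), C i)
        - q * ∑ i ∈ Finset.range (n+1), (i:ℝ) * C i := by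
    intro C
    rw [Finset.mul_sum, Finset.mul_sum, ← Finset.sum_sub_distrib]
    refine Finset.sum_congr rfl fun i hi => ?_
    rw [kraw_one' (Nat.lt_succ_iff.mp (Finset.mem_range.mp hi))]
    ring
  have hTA := hdesign 1 le_rfl le_rfl
  rw [krw A, hA.size] at hTA
  have hTB := hB.delsarte 1 hn
  rw [krw B, hB.size] at hTB
  have hT : ∑ i ∈ Finset.range (n+1), (i:ℝ) * B i
      ≤ ∑ i ∈ Finset.range (n+1), (i:ℝ) * A i := by nlinarith
  have eA : ∑ i ∈ Finset.range (n+1), (f i - (α + β * i)) * A i = f 0 - α := by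
    rw [Finset.sum_eq_single 0]
    · simp [hA.zeroth]
    · intro i hi hne
      have h1 : 1 ≤ i := Nat.one_le_iff_ne_zero.mpr hne
      have h2 : i ≤ n := Nat.lt_succ_iff.mp (Finset.mem_range.mp hi)
      by_cases hAi : A i = 0
      · simp [hAi]
      · rw [heq i h1 h2 hAi]; ring
    · intro h0; exact absurd (Finset.mem_range.mpr (Nat.succ_pos n)) h0
  have eB : f 0 - α ≤ ∑ i ∈ Finset.range (n+1), (f i - (α + β * i)) * B i := by
    have h0 : (f 0 - (α + β * (0:ℕ))) * B 0 = f 0 - α := by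
      simp [hB.zeroth]
    calc f 0 - α = (f 0 - (α + β * (0:ℕ))) * B 0 := h0.symm
      _ ≤ _ := Finset.single_le_sum
          (fun i hi => mul_nonneg
            (sub_nonneg.mpr (hle i (Nat.lt_succ_iff.mp (Finset.mem_range.mp hi))))
            (hB.nonneg i (Nat.lt_succ_iff.mp (Finset.mem_range.mp hi))))
          (Finset.mem_range.mpr (Nat.succ_pos n))
  rw [split A, split B, eA, hA.size, hB.size]
  nlinarith

/-- Proposition 5.5: if a quasicode `A` is a `1`-design
and its support consists of a single integer or two consecutive integers,
then `A` is a universally optimal quasicode. -/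
theorem uo_of_one_design_small_support {q n : ℕ} (hq : 2 ≤ q) (hn : 1 ≤ n)
    {N : ℝ} {A : ℕ → ℝ} (hA : IsQuasicode q n N A)
    (hdesign : IsDesign q n 1 A)
    (hsupp : ∃ a : ℕ, supp n A = {a} ∨ supp n A = {a, a+1}) :
    IsUOQuasicode q n N A := by
  classical
  have hmem : ∀ i, i ∈ supp n A ↔ (1 ≤ i ∧ i ≤ n ∧ A i ≠ 0) := by
    intro i
    simp [supp, Finset.mem_filter, Finset.mem_Icc, and_assoc]
  refine ⟨hA, ?_⟩
  intro f hf B hB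
  obtain ⟨a, hcase⟩ := hsupp
  rcases hcase with hs | hs
  · -- support is {a}
    have haS : a ∈ supp n A := hs ▸ Finset.mem_singleton_self a
    obtain ⟨ha1, han, hAa⟩ := (hmem a).mp haS
    rcases eq_or_lt_of_le han with hEq | hlt
    · -- a = n : use the constant function f n
      subst hEq
      refine lp_aux' hq hn hA hdesign (α := f a) (β := 0) le_rfl ?_ ?_ hB
      · intro x hx
        simpa using cm_anti' hf hx le_rfl
      · intro i h1 h2 hAi
        have hi : i ∈ supp a A := (hmem i).mpr ⟨h1, h2, hAi⟩
        rw [hs, Finset.mem_singleton] at hi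
        subst hi
        ring
    · -- a < n : use the secant line through a and a+1
      have ha2 : a + 1 ≤ n := hlt
      refine lp_aux' hq hn hA hdesign
        (α := f a - (f (a+1) - f a) * a) (β := f (a+1) - f a)
        (by linarith [cm_step' hf ha2]) ?_ ?_ hB
      · intro x hx
        have := cm_chord' hf ha2 x hx
        linarith [this]
      · intro i h1 h2 hAi
        have hi : i ∈ supp n A := (hmem i).mpr ⟨h1, h2, hAi⟩
        rw [hs, Finset.mem_singleton] at hi
        subst hi
        ring
  · -- support is {a, a+1}
    have haS : a ∈ supp n A := hs ▸ Finset.mem_insert_self a _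
    have ha1S : a + 1 ∈ supp n A := by
      rw [hs]; simp
    obtain ⟨ha1, _, _⟩ := (hmem a).mp haS
    obtain ⟨_, ha2, _⟩ := (hmem (a+1)).mp ha1S
    refine lp_aux' hq hn hA hdesign
      (α := f a - (f (a+1) - f a) * a) (β := f (a+1) - f a)
      (by linarith [cm_step' hf ha2]) ?_ ?_ hB
    · intro x hx
      have := cm_chord' hf ha2 x hx
      linarith [this]
    · intro i h1 h2 hAi
      have hi : i ∈ supp n A := (hmem i).mpr ⟨h1, h2, hAi⟩
      rw [hs, Finset.mem_insert, Finset.mem_singleton] at hi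
      rcases hi with hi | hi <;> subst hi
      · ring
      · push_cast
        ring
end

section
/- Let q ≥ 2 and n ≥ 1, let F be an alphabet with q elements, and let C ⊆ F^n be a nonempty code whose distance distribution is a universally optimal quasicode (i.e., C is LP universally optimal). Then C is distance regular: for every i ∈ {0,1,…,n} and all x, y ∈ C, the number of codewords of C at Hamming distance i from x equals the number of codewords of C at Hamming distance i from y. -/
open Finset

/-- The `f`-potential energy of a code `C ⊆ F^n`:
`E_f(C) = (1/|C|) ∑_{x,y ∈ C, x ≠ y} f(|x−y|)`, where `|x−y|` is Hamming distance. -/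
noncomputable def energy {n : ℕ} {F : Type*} [DecidableEq F]
    (f : ℕ → ℝ) (C : Finset (Fin n → F)) : ℝ :=
  (1 / (C.card : ℝ)) * ∑ x ∈ C, ∑ y ∈ C, if x ≠ y then f (hammingDist x y) else 0

open scoped Classical in
/-- The distance distribution of a nonempty code `C ⊆ F^n`:
`A_i = (1/|C|)·#{(x,y) ∈ C² : |x−y| = i}`. -/
noncomputable def distDist {n : ℕ} {F : Type*} [DecidableEq F]
    (C : Finset (Fin n → F)) : ℕ → ℝ :=
  fun i => (1 / (C.card : ℝ)) *
    (((C ×ˢ C).filter (fun p => hammingDist p.1 p.2 = i)).card : ℝ)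


section LPUOAux

open Polynomial

private lemma lpuo_coeff_prod_one_add {α : Type*} [DecidableEq α] (u : Finset α) (c : α → ℝ) :
    ∀ j, (∏ i ∈ u, (1 + Polynomial.C (c i) * Polynomial.X)).coeff j
      = ∑ S ∈ u.powersetCard j, ∏ i ∈ S, c i := by
  induction u using Finset.induction_on with
  | empty =>
    intro j
    cases j with
    | zero => simp
    | succ j =>
      rw [Finset.powersetCard_eq_empty.2 (by simp)]
      simp [Polynomial.coeff_one]
  | @insert a u hx ih =>
    intro j
    rw [Finset.prod_insert hx, add_mul, one_mul, mul_assoc]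
    cases j with
    | zero =>
      rw [Polynomial.coeff_add, Polynomial.coeff_C_mul, Polynomial.mul_coeff_zero,
        Polynomial.coeff_X_zero, zero_mul, mul_zero, add_zero, ih 0]
      simp
    | succ j =>
      rw [Polynomial.coeff_add, Polynomial.coeff_C_mul, Polynomial.coeff_X_mul, ih (j+1), ih j,
        Finset.powersetCard_succ_insert hx]
      rw [Finset.sum_union]
      · congr 1
        rw [Finset.sum_image]
        · rw [Finset.mul_sum]
          refine Finset.sum_congr rfl fun S hS => ?_
          rw [Finset.prod_insert fun haS => hx ((Finset.mem_powersetCard.1 hS).1 haS)]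
        · intro S hS T hT hST
          have hSa : a ∉ S := fun h => hx ((Finset.mem_powersetCard.1 hS).1 h)
          have hTa : a ∉ T := fun h => hx ((Finset.mem_powersetCard.1 hT).1 h)
          rw [← Finset.erase_insert hSa, ← Finset.erase_insert hTa, hST]
      · rw [Finset.disjoint_left]
        intro S hS hS'
        obtain ⟨T, hT, rfl⟩ := Finset.mem_image.1 hS'
        exact hx ((Finset.mem_powersetCard.1 hS).1 (Finset.mem_insert_self a T))

private lemma lpuo_coeff_one_add_pow (a : ℝ) (e r : ℕ) :
    ((1 + Polynomial.C a * Polynomial.X)^e).coeff r = (e.choose r : ℝ) * a^r := by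
  have h := lpuo_coeff_prod_one_add (Finset.range e) (fun _ => a) r
  rw [Finset.prod_const, Finset.card_range] at h
  rw [h, Finset.sum_congr rfl (fun S hS => Finset.prod_const a),
    Finset.sum_congr rfl (fun S hS => by
      rw [(Finset.mem_powersetCard.1 hS).2] : ∀ S ∈ (Finset.range e).powersetCard r, a ^ S.card = a ^ r),
    Finset.sum_const, Finset.card_powersetCard, Finset.card_range, nsmul_eq_mul]

private lemma lpuo_key_identity (n q : ℕ) {F : Type*} [Fintype F] [DecidableEq F]
    (x y : Fin n → F) (j : ℕ) :
    ∑ S ∈ (Finset.univ : Finset (Fin n)).powersetCard j,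
        ∏ i ∈ S, ((q : ℝ) * (if x i = y i then 1 else 0) - 1)
      = kraw n q j (hammingDist x y) := by
  classical
  set c : Fin n → ℝ := fun i => if x i = y i then (q : ℝ) - 1 else -1 with hc
  have h1 : ∑ S ∈ (Finset.univ : Finset (Fin n)).powersetCard j,
      ∏ i ∈ S, ((q : ℝ) * (if x i = y i then 1 else 0) - 1)
      = (∏ i ∈ (Finset.univ : Finset (Fin n)), (1 + Polynomial.C (c i) * Polynomial.X)).coeff j := by
    rw [lpuo_coeff_prod_one_add]
    refine Finset.sum_congr rfl fun S _ => Finset.prod_congr rfl fun i _ => ?_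
    by_cases h : x i = y i <;> simp [hc, h]
  rw [h1]
  set E : Finset (Fin n) := Finset.univ.filter (fun i => x i = y i) with hE
  have hduniv : (Finset.univ : Finset (Fin n)) \ E = Finset.univ.filter (fun i => ¬ x i = y i) :=
    (Finset.filter_not _ _).symm
  have hdcard : hammingDist x y = ((Finset.univ : Finset (Fin n)) \ E).card := by
    rw [hduniv]; rfl
  have hcards : ((Finset.univ : Finset (Fin n)) \ E).card + E.card = n := by
    rw [Finset.card_sdiff_add_card_eq_card (Finset.filter_subset _ _)]
    simp
  have hEcard : E.card = n - hammingDist x y := by omega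
  have hprod1 : ∏ i ∈ (Finset.univ : Finset (Fin n)) \ E, (1 + Polynomial.C (c i) * Polynomial.X)
      = (1 + Polynomial.C (-1 : ℝ) * Polynomial.X) ^ (hammingDist x y) := by
    rw [hdcard, ← Finset.prod_const]
    refine Finset.prod_congr rfl fun i hi => ?_
    rw [Finset.mem_sdiff, hE, Finset.mem_filter] at hi
    have hne : ¬ x i = y i := fun h => hi.2 ⟨Finset.mem_univ i, h⟩
    simp [hc, hne]
  have hprod2 : ∏ i ∈ E, (1 + Polynomial.C (c i) * Polynomial.X)
      = (1 + Polynomial.C ((q : ℝ) - 1) * Polynomial.X) ^ E.card := by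
    rw [← Finset.prod_const]
    refine Finset.prod_congr rfl fun i hi => ?_
    rw [hE, Finset.mem_filter] at hi
    simp [hc, hi.2]
  rw [← Finset.prod_sdiff (Finset.filter_subset (fun i => x i = y i) Finset.univ)]
  rw [show Finset.univ.filter (fun i => x i = y i) = E from rfl, hprod1, hprod2,
    Polynomial.coeff_mul, Finset.Nat.sum_antidiagonal_eq_sum_range_succ_mk]
  rw [kraw]
  refine Finset.sum_congr rfl fun m hm => ?_
  rw [lpuo_coeff_one_add_pow, lpuo_coeff_one_add_pow, hEcard]
  ring

private noncomputable def lpuoPhi (q : ℕ) {F : Type*} [DecidableEq F] (a c : F) : ℝ :=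
  Real.sqrt q * (if a = c then 1 else 0) - (Real.sqrt q)⁻¹

private lemma lpuo_phi_inner {q : ℕ} (hq : 1 ≤ q) {F : Type*} [Fintype F] [DecidableEq F]
    (hF : Fintype.card F = q) (a b : F) :
    ∑ c : F, lpuoPhi q a c * lpuoPhi q b c = (q : ℝ) * (if a = b then 1 else 0) - 1 := by
  have hq0 : (0 : ℝ) < q := by exact_mod_cast hq
  have hss : Real.sqrt q * Real.sqrt q = q := Real.mul_self_sqrt hq0.le
  have hspos : (0 : ℝ) < Real.sqrt q := Real.sqrt_pos.2 hq0
  have hsr : Real.sqrt q * (Real.sqrt q)⁻¹ = 1 := mul_inv_cancel₀ hspos.ne'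
  have hinv : (Real.sqrt q)⁻¹ * (Real.sqrt q)⁻¹ = (q : ℝ)⁻¹ := by
    rw [← mul_inv, hss]
  have hterm : ∀ c : F, lpuoPhi q a c * lpuoPhi q b c
      = (q : ℝ) * ((if a = c then (1:ℝ) else 0) * (if b = c then (1:ℝ) else 0))
        - (if a = c then (1:ℝ) else 0) - (if b = c then (1:ℝ) else 0) + (q : ℝ)⁻¹ := by
    intro c
    unfold lpuoPhi
    set A := (if a = c then (1:ℝ) else 0)
    set B := (if b = c then (1:ℝ) else 0)
    linear_combination A * B * hss - A * hsr - B * hsr + hinv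
  rw [Finset.sum_congr rfl fun c _ => hterm c]
  rw [Finset.sum_add_distrib, Finset.sum_sub_distrib, Finset.sum_sub_distrib, ← Finset.mul_sum]
  have h1 : ∑ c : F, (if a = c then (1:ℝ) else 0) = 1 := by
    rw [Finset.sum_ite_eq]; simp
  have h2 : ∑ c : F, (if b = c then (1:ℝ) else 0) = 1 := by
    rw [Finset.sum_ite_eq]; simp
  have h3 : ∑ c : F, (if a = c then (1:ℝ) else 0) * (if b = c then (1:ℝ) else 0)
      = (if a = b then 1 else 0) := by
    rw [Finset.sum_congr rfl (fun c _ => ite_mul _ _ _ _)]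
    simp only [one_mul, zero_mul]
    rw [Finset.sum_ite_eq]
    by_cases h : a = b <;> simp [h, eq_comm]
  have h4 : ∑ _c : F, (q : ℝ)⁻¹ = 1 := by
    rw [Finset.sum_const, Finset.card_univ, hF, nsmul_eq_mul, mul_inv_cancel₀ hq0.ne']
  rw [h1, h2, h3, h4]
  ring

private lemma lpuo_gram_prod {n q : ℕ} (hq : 1 ≤ q) {F : Type*} [Fintype F] [DecidableEq F]
    (hF : Fintype.card F = q) (S : Finset (Fin n)) (x y : Fin n → F) :
    ∑ g : Fin n → F, (∏ i ∈ S, lpuoPhi q (x i) (g i)) * (∏ i ∈ S, lpuoPhi q (y i) (g i))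
      = (q : ℝ) ^ (n - S.card) * ∏ i ∈ S, ((q : ℝ) * (if x i = y i then 1 else 0) - 1) := by
  have hq0 : (0 : ℝ) < q := by exact_mod_cast hq
  have step1 : ∀ g : Fin n → F,
      (∏ i ∈ S, lpuoPhi q (x i) (g i)) * (∏ i ∈ S, lpuoPhi q (y i) (g i))
      = ∏ i : Fin n, (if i ∈ S then lpuoPhi q (x i) (g i) * lpuoPhi q (y i) (g i) else 1) := by
    intro g
    rw [← Finset.prod_mul_distrib, Finset.prod_ite_mem, Finset.univ_inter]
  rw [Finset.sum_congr rfl fun g _ => step1 g]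
  have step3 := Finset.prod_univ_sum (fun _ : Fin n => (Finset.univ : Finset F))
    (fun i c => if i ∈ S then lpuoPhi q (x i) c * lpuoPhi q (y i) c else 1)
  rw [Fintype.piFinset_univ] at step3
  rw [← step3]
  have step4 : ∀ i : Fin n, (∑ c : F, if i ∈ S then lpuoPhi q (x i) c * lpuoPhi q (y i) c else 1)
      = if i ∈ S then (q : ℝ) * (if x i = y i then 1 else 0) - 1 else (q : ℝ) := by
    intro i
    by_cases h : i ∈ S
    · simp only [h, if_true]
      exact lpuo_phi_inner hq hF (x i) (y i)
    · simp only [h, if_false]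
      rw [Finset.sum_const, Finset.card_univ, hF, nsmul_eq_mul, mul_one]
  rw [Finset.prod_congr rfl fun i _ => step4 i]
  rw [Finset.prod_ite]
  rw [Finset.prod_const]
  have hfilt : Finset.univ.filter (fun i => i ∈ S) = S := by
    ext i; simp
  have hfilt2 : (Finset.univ.filter (fun i => ¬ i ∈ S)).card = n - S.card := by
    rw [Finset.filter_not, Finset.card_sdiff_of_subset (by intro i _; simp [hfilt, Finset.mem_filter])]
    rw [hfilt, Finset.card_univ, Fintype.card_fin]
  rw [hfilt, hfilt2, mul_comm]

private lemma lpuo_pointwise_vanish {n q : ℕ} (hq : 1 ≤ q) {F : Type*} [Fintype F] [DecidableEq F]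
    (hF : Fintype.card F = q) (C : Finset (Fin n → F)) (j : ℕ)
    (h0 : ∑ x ∈ C, ∑ y ∈ C, kraw n q j (hammingDist x y) = 0) :
    ∀ x : Fin n → F, ∑ y ∈ C, kraw n q j (hammingDist x y) = 0 := by
  have hq0 : (0 : ℝ) < q := by exact_mod_cast hq
  have hqp : (0 : ℝ) < (q : ℝ) ^ (n - j) := pow_pos hq0 _
  set Φ : (Fin n → F) → Finset (Fin n) → (Fin n → F) → ℝ :=
    fun z S g => ∏ i ∈ S, lpuoPhi q (z i) (g i) with hΦ
  set w : Finset (Fin n) → (Fin n → F) → ℝ := fun S g => ∑ y ∈ C, Φ y S g with hw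
  have main : ∀ x : Fin n → F, (q : ℝ) ^ (n - j) * ∑ y ∈ C, kraw n q j (hammingDist x y)
      = ∑ S ∈ (Finset.univ : Finset (Fin n)).powersetCard j, ∑ g : Fin n → F,
          Φ x S g * w S g := by
    intro x
    rw [Finset.mul_sum]
    have hy : ∀ y : Fin n → F, (q : ℝ) ^ (n - j) * kraw n q j (hammingDist x y)
        = ∑ S ∈ (Finset.univ : Finset (Fin n)).powersetCard j, ∑ g : Fin n → F,
            Φ x S g * Φ y S g := by
      intro y
      rw [← lpuo_key_identity n q x y j, Finset.mul_sum]
      refine Finset.sum_congr rfl fun S hS => ?_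
      have hcard : S.card = j := (Finset.mem_powersetCard.1 hS).2
      rw [lpuo_gram_prod hq hF S x y, hcard]
    rw [Finset.sum_congr rfl fun y _ => hy y, Finset.sum_comm]
    refine Finset.sum_congr rfl fun S _ => ?_
    rw [Finset.sum_comm]
    refine Finset.sum_congr rfl fun g _ => ?_
    rw [hw, Finset.mul_sum]
  have hsq : ∑ S ∈ (Finset.univ : Finset (Fin n)).powersetCard j, ∑ g : Fin n → F,
      (w S g)^2 = 0 := by
    have h1 : ∑ x ∈ C, ((q : ℝ) ^ (n - j) * ∑ y ∈ C, kraw n q j (hammingDist x y))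
        = ∑ S ∈ (Finset.univ : Finset (Fin n)).powersetCard j, ∑ g : Fin n → F, (w S g)^2 := by
      rw [Finset.sum_congr rfl fun x _ => main x, Finset.sum_comm]
      refine Finset.sum_congr rfl fun S _ => ?_
      rw [Finset.sum_comm]
      refine Finset.sum_congr rfl fun g _ => ?_
      rw [← Finset.sum_mul, sq]
    rw [← h1, ← Finset.mul_sum, h0, mul_zero]
  have hwzero : ∀ S ∈ (Finset.univ : Finset (Fin n)).powersetCard j, ∀ g : Fin n → F,
      w S g = 0 := by
    intro S hS g
    have houter := (Finset.sum_eq_zero_iff_of_nonneg (fun S _ =>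
      Finset.sum_nonneg fun g _ => sq_nonneg (w S g))).1 hsq S hS
    have hinner := (Finset.sum_eq_zero_iff_of_nonneg (fun g _ => sq_nonneg (w S g))).1 houter
    exact pow_eq_zero_iff (n := 2) (by norm_num) |>.1 (hinner g (Finset.mem_univ g))
  intro x
  have h2 : (q : ℝ) ^ (n - j) * ∑ y ∈ C, kraw n q j (hammingDist x y) = 0 := by
    rw [main x]
    refine Finset.sum_eq_zero fun S hS => Finset.sum_eq_zero fun g _ => ?_
    rw [hwzero S hS g, mul_zero]
  exact (mul_eq_zero.1 h2).resolve_left hqp.ne'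

private lemma lpuo_fdiff_choose (n k : ℕ) : ∀ m i, i + m ≤ n →
    (fdiff^[m] (fun i => ((n - i).choose k : ℝ))) i
      = (-1 : ℝ)^m * (if m ≤ k then (((n - i - m).choose (k - m) : ℕ) : ℝ) else 0) := by
  intro m
  induction m with
  | zero => intro i hi; simp
  | succ m ih =>
    intro i hi
    rw [Function.iterate_succ_apply']
    have hfd : (fdiff (fdiff^[m] (fun i => ((n - i).choose k : ℝ)))) i
        = (fdiff^[m] (fun i => ((n - i).choose k : ℝ))) (i+1)
          - (fdiff^[m] (fun i => ((n - i).choose k : ℝ))) i := rfl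
    rw [hfd, ih (i+1) (by omega), ih i (by omega)]
    by_cases hmk : m + 1 ≤ k
    · have hm : m ≤ k := by omega
      rw [if_pos hm, if_pos hm, if_pos hmk]
      have h1 : n - (i+1) - m = n - i - (m+1) := by omega
      have h2 : n - i - m = (n - i - (m+1)) + 1 := by omega
      have h3 : k - m = (k - (m+1)) + 1 := by omega
      rw [h1, h2, h3, Nat.choose_succ_succ]
      push_cast
      ring
    · by_cases hm : m ≤ k
      · rw [if_pos hm, if_pos hm, if_neg hmk]
        have e1 : k - m = 0 := by omega
        rw [e1]
        simp only [Nat.choose_zero_right, Nat.cast_one]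
        ring
      · rw [if_neg hm, if_neg hm, if_neg (by omega)]
        ring

private lemma lpuo_cm_choose (n k : ℕ) :
    CompletelyMonotonicOn (fun i => ((n - i).choose k : ℝ)) 0 n := by
  intro m i _ him
  rw [lpuo_fdiff_choose n k m i him, ← mul_assoc, ← mul_pow]
  norm_num
  split
  · positivity
  · exact le_refl 0

private lemma lpuo_fiber_sum {n : ℕ} {F : Type*} [Fintype F] [DecidableEq F]
    (C : Finset (Fin n → F)) (x : Fin n → F) (g : ℕ → ℝ) :
    ∑ i ∈ Finset.range (n+1), ((C.filter (fun z => hammingDist x z = i)).card : ℝ) * g i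
      = ∑ z ∈ C, g (hammingDist x z) := by
  rw [← Finset.sum_fiberwise_of_maps_to (g := fun z => hammingDist x z)
    (t := Finset.range (n+1))
    (fun z _ => Finset.mem_range.2 (Nat.lt_succ_of_le
      (le_trans hammingDist_le_card_fintype (by simp))))
    (fun z => g (hammingDist x z))]
  refine Finset.sum_congr rfl fun i _ => ?_
  rw [Finset.sum_congr rfl (fun z hz => by rw [(Finset.mem_filter.1 hz).2]),
    Finset.sum_const, nsmul_eq_mul]

private lemma lpuo_pair_sum {n : ℕ} {F : Type*} [Fintype F] [DecidableEq F]
    (C : Finset (Fin n → F)) (g : ℕ → ℝ) :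
    ∑ i ∈ Finset.range (n+1),
        (((C ×ˢ C).filter (fun p => hammingDist p.1 p.2 = i)).card : ℝ) * g i
      = ∑ x ∈ C, ∑ y ∈ C, g (hammingDist x y) := by
  rw [← Finset.sum_product (f := fun p : (Fin n → F) × (Fin n → F) => g (hammingDist p.1 p.2))]
  rw [← Finset.sum_fiberwise_of_maps_to
    (g := fun p : (Fin n → F) × (Fin n → F) => hammingDist p.1 p.2)
    (t := Finset.range (n+1))
    (fun p _ => Finset.mem_range.2 (Nat.lt_succ_of_le
      (le_trans hammingDist_le_card_fintype (by simp))))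
    (fun p => g (hammingDist p.1 p.2))]
  refine Finset.sum_congr rfl fun i _ => ?_
  rw [Finset.sum_congr rfl (fun p hp => by rw [(Finset.mem_filter.1 hp).2]),
    Finset.sum_const, nsmul_eq_mul]

private lemma lpuo_pair_card {n : ℕ} {F : Type*} [Fintype F] [DecidableEq F]
    (C : Finset (Fin n → F)) (i : ℕ) :
    (((C ×ˢ C).filter (fun p => hammingDist p.1 p.2 = i)).card : ℝ)
      = ∑ x ∈ C, ((C.filter fun z => hammingDist x z = i).card : ℝ) := by
  have h : ((C ×ˢ C).filter (fun p => hammingDist p.1 p.2 = i)).card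
      = ∑ x ∈ C, (C.filter fun z => hammingDist x z = i).card := by
    rw [Finset.card_filter, Finset.sum_product]
    exact Finset.sum_congr rfl fun x _ => (Finset.card_filter _ _).symm
  rw [h]
  push_cast
  rfl

private lemma lpuo_inversion {n : ℕ} (r s : ℕ → ℝ)
    (h : ∀ k, k ≤ n → ∑ i ∈ Finset.range (n+1), ((n - i).choose k : ℝ) * r i
        = ∑ i ∈ Finset.range (n+1), ((n - i).choose k : ℝ) * s i) :
    ∀ i, i ≤ n → r i = s i := by
  intro i0
  induction i0 using Nat.strong_induction_on with
  | _ i0 ih =>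
    intro hi0
    have hk := h (n - i0) (by omega)
    have hsum : ∑ i ∈ Finset.range (n+1), ((n - i).choose (n - i0) : ℝ) * (r i - s i) = 0 := by
      simp only [mul_sub]
      rw [Finset.sum_sub_distrib, hk, sub_self]
    have hsingle : ∑ i ∈ Finset.range (n+1), ((n - i).choose (n - i0) : ℝ) * (r i - s i)
        = ((n - i0).choose (n - i0) : ℝ) * (r i0 - s i0) := by
      refine Finset.sum_eq_single_of_mem i0 (Finset.mem_range.2 (by omega)) fun b hb hbne => ?_
      rcases lt_or_gt_of_ne hbne with hlt | hgt
      · rw [ih b hlt (by omega), sub_self, mul_zero]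
      · have hb' : b ≤ n := by have := Finset.mem_range.1 hb; omega
        have : (n - b).choose (n - i0) = 0 := Nat.choose_eq_zero_of_lt (by omega)
        rw [this]
        simp
    rw [hsingle, Nat.choose_self] at hsum
    simp only [Nat.cast_one, one_mul] at hsum
    linarith

end LPUOAux

set_option maxHeartbeats 1000000 in
/-- part of Theorem 1.2: an LP universally optimal code —
one whose distance distribution is a universally optimal quasicode — is
distance regular: for each `i`, every codeword has the same number of
codewords at distance `i` from it. -/
theorem lp_uo_distance_regular {q n : ℕ} (hq : 2 ≤ q) (hn : 1 ≤ n)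
    {F : Type*} [Fintype F] [DecidableEq F] (hF : Fintype.card F = q)
    (C : Finset (Fin n → F)) (hC : C.Nonempty)
    (hUO : IsUOQuasicode q n (C.card : ℝ) (distDist C)) :
    ∀ i, i ≤ n → ∀ x ∈ C, ∀ y ∈ C,
      (C.filter (fun z => hammingDist x z = i)).card
        = (C.filter (fun z => hammingDist y z = i)).card := by
  classical
  obtain ⟨hQ, hOpt⟩ := hUO
  have hq1 : 1 ≤ q := by omega
  have hNpos : (0:ℝ) < (C.card : ℝ) := by exact_mod_cast Finset.card_pos.2 hC
  set Nc : (Fin n → F) → ℕ → ℝ :=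
    fun w i => ((C.filter fun z => hammingDist w z = i).card : ℝ) with hNc
  set M : ℕ → ℝ := fun j => ∑ i ∈ Finset.range (n+1), distDist C i * kraw n q j i with hM
  set P : (Fin n → F) → ℕ → ℝ := fun w j => ∑ z ∈ C, kraw n q j (hammingDist w z) with hP
  have hAi : ∀ i, (C.card : ℝ) * distDist C i
      = (((C ×ˢ C).filter (fun p => hammingDist p.1 p.2 = i)).card : ℝ) := by
    intro i
    simp only [distDist]
    rw [one_div, ← mul_assoc, mul_inv_cancel₀ hNpos.ne', one_mul]
  have hNcA : ∀ i, ∑ w ∈ C, Nc w i = (C.card : ℝ) * distDist C i := by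
    intro i
    rw [hAi, lpuo_pair_card]
  have hMP : ∀ j, (C.card : ℝ) * M j = ∑ x ∈ C, P x j := by
    intro j
    simp only [hM, hP]
    rw [Finset.mul_sum]
    rw [Finset.sum_congr rfl fun i _ => by rw [← mul_assoc, hAi i]]
    exact lpuo_pair_sum C (kraw n q j)
  have hMnn : ∀ j, j ≤ n → 0 ≤ M j := fun j hj => hQ.delsarte j hj
  have hkey : ∀ j, M j = 0 → ∀ ww : Fin n → F, P ww j = 0 := by
    intro j hMj ww
    have h1 := hMP j
    rw [hMj, mul_zero] at h1
    have h0 : ∑ x ∈ C, ∑ y ∈ C, kraw n q j (hammingDist x y) = 0 := by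
      simp only [hP] at h1
      exact h1.symm
    simpa only [hP] using lpuo_pointwise_vanish hq1 hF C j h0 ww
  have hstep : ∀ w ∈ C, ∀ k : ℕ,
      ∑ i' ∈ Finset.range (n+1), ((n - i').choose k : ℝ) * distDist C i'
        ≤ ∑ i' ∈ Finset.range (n+1), ((n - i').choose k : ℝ) * Nc w i' := by
    intro w hw k
    have hMpos : ∀ j, j ≤ n → P w j < 0 → 0 < M j := by
      intro j hj hPj
      rcases (hMnn j hj).lt_or_eq with h | h
      · exact h
      · exact absurd (hkey j h.symm w) (by intro hz; rw [hz] at hPj; exact lt_irrefl 0 hPj)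
    set t : ℝ := (Finset.range (n+1)).inf' (Finset.nonempty_range_iff.2 (by omega))
      (fun j => if P w j < 0 then M j / (M j - P w j) else 1) with ht
    have htpos : 0 < t := by
      rw [ht, Finset.lt_inf'_iff]
      intro j hj
      by_cases hPj : P w j < 0
      · rw [if_pos hPj]
        have hMj := hMpos j (Nat.lt_succ_iff.1 (Finset.mem_range.1 hj)) hPj
        exact div_pos hMj (by linarith)
      · rw [if_neg hPj]; norm_num
    have htle : ∀ j ∈ Finset.range (n+1),
        t ≤ (if P w j < 0 then M j / (M j - P w j) else 1) :=
      fun j hj => ht ▸ Finset.inf'_le _ hj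
    have ht1 : t ≤ 1 := by
      refine le_trans (htle 0 (Finset.mem_range.2 (by omega))) ?_
      by_cases hP0 : P w 0 < 0
      · rw [if_pos hP0]
        have hM0 := hMpos 0 (by omega) hP0
        rw [div_le_one (by linarith)]
        linarith
      · rw [if_neg hP0]
    have hcons : ∀ j, j ≤ n → 0 ≤ (1 - t) * M j + t * P w j := by
      intro j hj
      by_cases hPj : P w j < 0
      · have h1 := htle j (Finset.mem_range.2 (by omega))
        rw [if_pos hPj] at h1
        have hMj := hMpos j hj hPj
        have hden : (0:ℝ) < M j - P w j := by linarith
        have h2 : t * (M j - P w j) ≤ M j := (le_div_iff₀ hden).1 h1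
        rw [mul_sub] at h2
        nlinarith
      · push_neg at hPj
        have h1 : 0 ≤ (1 - t) * M j := mul_nonneg (by linarith) (hMnn j hj)
        have h2 : 0 ≤ t * P w j := mul_nonneg htpos.le hPj
        linarith
    set B : ℕ → ℝ := fun i' => (1 - t) * distDist C i' + t * Nc w i' with hB
    have hNc0 : Nc w 0 = 1 := by
      simp only [hNc]
      have hfil : C.filter (fun z => hammingDist w z = 0) = {w} := by
        ext z
        constructor
        · intro hz
          have h := Finset.mem_filter.1 hz
          exact Finset.mem_singleton.2 (eq_of_hammingDist_eq_zero h.2).symm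
        · intro hz
          rw [Finset.mem_singleton.1 hz]
          exact Finset.mem_filter.2 ⟨hw, hammingDist_self w⟩
      rw [hfil, Finset.card_singleton, Nat.cast_one]
    have hNcsum : ∑ i' ∈ Finset.range (n+1), Nc w i' = (C.card : ℝ) := by
      have h := lpuo_fiber_sum C w (fun _ => (1:ℝ))
      simp only [mul_one] at h
      simp only [hNc]
      rw [h, Finset.sum_const, nsmul_eq_mul, mul_one]
    have hBq : IsQuasicode q n (C.card : ℝ) B := by
      constructor
      · intro i' hi'
        simp only [hB]
        have h1 := hQ.nonneg i' hi'
        have hnn : (0:ℝ) ≤ Nc w i' := by simp only [hNc]; exact Nat.cast_nonneg _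
        have h2 : (0:ℝ) ≤ (1 - t) * distDist C i' := mul_nonneg (by linarith) h1
        have h3 : (0:ℝ) ≤ t * Nc w i' := mul_nonneg htpos.le hnn
        linarith
      · intro j hj
        have hPw : ∑ i' ∈ Finset.range (n+1), Nc w i' * kraw n q j i' = P w j := by
          simp only [hNc, hP]
          exact lpuo_fiber_sum C w (kraw n q j)
        have hspl : ∑ i' ∈ Finset.range (n+1), B i' * kraw n q j i'
            = (1 - t) * M j + t * P w j := by
          simp only [hB, add_mul]
          rw [Finset.sum_add_distrib]
          congr 1
          · simp only [hM]
            rw [Finset.mul_sum]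
            exact Finset.sum_congr rfl fun i' _ => by ring
          · rw [← hPw, Finset.mul_sum]
            exact Finset.sum_congr rfl fun i' _ => by ring
        rw [hspl]
        exact hcons j hj
      · simp only [hB]
        rw [Finset.sum_add_distrib, ← Finset.mul_sum, ← Finset.mul_sum, hQ.size, hNcsum]
        ring
      · simp only [hB]
        rw [hQ.zeroth, hNc0]
        ring
    have hopt := hOpt (fun i' => ((n - i').choose k : ℝ)) (lpuo_cm_choose n k) B hBq
    have hexp : ∑ i' ∈ Finset.range (n+1), ((n - i').choose k : ℝ) * B i'
        = (1 - t) * ∑ i' ∈ Finset.range (n+1), ((n - i').choose k : ℝ) * distDist C i'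
          + t * ∑ i' ∈ Finset.range (n+1), ((n - i').choose k : ℝ) * Nc w i' := by
      rw [Finset.mul_sum, Finset.mul_sum, ← Finset.sum_add_distrib]
      exact Finset.sum_congr rfl fun i' _ => by simp only [hB]; ring
    rw [hexp] at hopt
    by_contra hlt
    push_neg at hlt
    have hmul := mul_lt_mul_of_pos_left hlt htpos
    linarith
  have hconst : ∀ k : ℕ, ∀ w ∈ C,
      ∑ i' ∈ Finset.range (n+1), ((n - i').choose k : ℝ) * Nc w i'
        = ∑ i' ∈ Finset.range (n+1), ((n - i').choose k : ℝ) * distDist C i' := by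
    intro k w hw
    have havg : ∑ u ∈ C, (∑ i' ∈ Finset.range (n+1), ((n - i').choose k : ℝ) * Nc u i')
        = (C.card : ℝ) * ∑ i' ∈ Finset.range (n+1), ((n - i').choose k : ℝ) * distDist C i' := by
      rw [Finset.sum_comm, Finset.mul_sum]
      refine Finset.sum_congr rfl fun i' _ => ?_
      rw [← Finset.mul_sum, hNcA i']
      ring
    have hzero : ∑ u ∈ C, ((∑ i' ∈ Finset.range (n+1), ((n - i').choose k : ℝ) * Nc u i')
        - ∑ i' ∈ Finset.range (n+1), ((n - i').choose k : ℝ) * distDist C i') = 0 := by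
      rw [Finset.sum_sub_distrib, havg, Finset.sum_const, nsmul_eq_mul, sub_self]
    have h := (Finset.sum_eq_zero_iff_of_nonneg
      (fun u hu => sub_nonneg.2 (hstep u hu k))).1 hzero w hw
    linarith [h]
  intro i hi x hx y hy
  have hxy : ∀ k, k ≤ n →
      ∑ i' ∈ Finset.range (n+1), ((n - i').choose k : ℝ) * Nc x i'
        = ∑ i' ∈ Finset.range (n+1), ((n - i').choose k : ℝ) * Nc y i' :=
    fun k _ => (hconst k x hx).trans (hconst k y hy).symm
  have hfin := lpuo_inversion (fun i' => Nc x i') (fun i' => Nc y i') hxy i hi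
  simp only [hNc] at hfin
  exact_mod_cast hfin
end

section
/- Let q ≥ 2 and n ≥ 1, let F be an alphabet with q elements, let C ⊆ F^n be a code with 0 < |C| < q^n, and let f : {1,…,n} → ℝ. Then (q^n − |C|)·E_f(F^n ∖ C) = |C|·E_f(C) + (q^n − 2|C|)·Σ_{k=1}^n C(n,k)(q−1)^k f(k). In particular, the complement F^n ∖ C is universally optimal among codes of size q^n − |C| if and only if C is universally optimal among codes of size |C|. -/
open Finset

/-- A code `C ⊆ F^n` is universally optimal: `E_f(C) ≤ E_f(C')` for every
code `C'` of the same size and every completely monotonic potential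
function `f : {1,…,n} → ℝ`. -/
def UniversallyOptimalCode {n : ℕ} {F : Type*} [Fintype F] [DecidableEq F]
    (C : Finset (Fin n → F)) : Prop :=
  ∀ f : ℕ → ℝ, CompletelyMonotonicOn f 1 n →
    ∀ C' : Finset (Fin n → F), C'.card = C.card → energy f C ≤ energy f C'

section Helpers
set_option linter.unusedSectionVars false
variable {n : ℕ} {F : Type*} [Fintype F] [DecidableEq F]

lemma hammingDist_eq_card_filter (x y : Fin n → F) :
    hammingDist x y = (univ.filter fun i => x i ≠ y i).card := rfl

lemma mem_fiber_iff (x y : Fin n → F) (s : Finset (Fin n)) :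
    y ∈ Fintype.piFinset (fun i => if i ∈ s then ({x i}ᶜ : Finset F) else {x i}) ↔
      (univ.filter fun i => x i ≠ y i) = s := by
  simp only [Fintype.mem_piFinset]
  constructor
  · intro h
    ext i
    specialize h i
    by_cases hi : i ∈ s <;> simp [hi] at h ⊢ <;> tauto
  · intro h i
    have := (Finset.ext_iff.mp h i)
    by_cases hi : i ∈ s <;> simp [hi] at this ⊢ <;> tauto

lemma sphere_card (x : Fin n → F) (k : ℕ) :
    (univ.filter fun y => hammingDist x y = k).card
      = n.choose k * (Fintype.card F - 1)^k := by
  have hset : (univ.filter fun y => hammingDist x y = k)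
      = (univ.powersetCard k).biUnion
          (fun s => Fintype.piFinset (fun i => if i ∈ s then ({x i}ᶜ : Finset F) else {x i})) := by
    ext y
    simp only [mem_filter, mem_univ, true_and, mem_biUnion, mem_powersetCard,
      mem_fiber_iff, hammingDist_eq_card_filter, Finset.mem_filter_univ]
    constructor
    · intro h
      exact ⟨_, ⟨subset_univ _, (Finset.mem_filter.mp h).2⟩, rfl⟩
    · rintro ⟨s, ⟨-, hs⟩, rfl⟩
      exact Finset.mem_filter.mpr ⟨mem_univ _, hs⟩
  rw [hset, card_biUnion]
  · rw [Finset.sum_congr rfl (fun s hs => ?_), Finset.sum_const, card_powersetCard,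
      card_univ, Fintype.card_fin, smul_eq_mul]
    rw [Fintype.card_piFinset]
    rw [Finset.prod_congr rfl (fun i _ => ?_)]
    swap
    · exact fun i => if i ∈ s then Fintype.card F - 1 else 1
    · rw [Finset.prod_ite_mem, Finset.univ_inter, Finset.prod_const,
        (mem_powersetCard.mp hs).2]
    · by_cases hi : i ∈ s <;> simp [hi, Finset.card_compl]
  · intro s hs t ht hst
    refine Finset.disjoint_left.mpr fun y hys hyt => hst ?_
    rw [← (mem_fiber_iff x y s).mp hys, (mem_fiber_iff x y t).mp hyt]

lemma row_sum {q : ℕ} (hq : 2 ≤ q) (hF : Fintype.card F = q) (f : ℕ → ℝ) (x : Fin n → F) :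
    ∑ y : Fin n → F, (if x ≠ y then f (hammingDist x y) else 0)
      = ∑ k ∈ Icc 1 n, (n.choose k : ℝ) * ((q : ℝ) - 1)^k * f k := by
  rw [← Finset.sum_fiberwise_of_maps_to (g := fun y => hammingDist x y) (t := range (n+1))
    (fun y _ => by
      simpa [Nat.lt_succ_iff] using (hammingDist_le_card_fintype (x := x) (y := y)).trans_eq
        (Fintype.card_fin n))]
  have hins : range (n+1) = insert 0 (Icc 1 n) := by
    ext i; simp [Nat.lt_succ_iff]; omega
  rw [hins, Finset.sum_insert (by simp)]
  have h0 : ∑ y ∈ univ.filter fun y => hammingDist x y = 0,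
      (if x ≠ y then f (hammingDist x y) else 0) = 0 := by
    apply Finset.sum_eq_zero
    intro y hy
    simp only [mem_filter] at hy
    simp [eq_of_hammingDist_eq_zero hy.2]
  rw [h0, zero_add]
  refine Finset.sum_congr rfl fun k hk => ?_
  have hk1 : 1 ≤ k := (mem_Icc.mp hk).1
  have : ∑ y ∈ univ.filter fun y => hammingDist x y = k,
      (if x ≠ y then f (hammingDist x y) else 0)
      = ∑ y ∈ univ.filter fun y => hammingDist x y = k, f k := by
    refine Finset.sum_congr rfl fun y hy => ?_
    simp only [mem_filter] at hy
    have hne : x ≠ y := by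
      intro h; rw [h, hammingDist_self] at hy; omega
    rw [if_pos hne, hy.2]
  rw [this, Finset.sum_const, sphere_card, hF, nsmul_eq_mul]
  push_cast [Nat.cast_sub (by omega : 1 ≤ q)]
  ring

lemma energy_compl {q : ℕ} (hq : 2 ≤ q) (hF : Fintype.card F = q)
    (C : Finset (Fin n → F)) (h0 : 0 < C.card) (h1 : C.card < q^n) (f : ℕ → ℝ) :
    ((q : ℝ)^n - C.card) * energy f (Finset.univ \ C)
      = (C.card : ℝ) * energy f C
        + ((q : ℝ)^n - 2 * C.card) * ∑ k ∈ Icc 1 n, (n.choose k : ℝ) * ((q : ℝ) - 1)^k * f k := by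
  set g : (Fin n → F) → (Fin n → F) → ℝ :=
    fun x y => if x ≠ y then f (hammingDist x y) else 0 with hg
  have hsym : ∀ x y, g x y = g y x := by
    intro x y; simp only [hg, ne_comm, hammingDist_comm]
  set M : ℝ := ∑ k ∈ Icc 1 n, (n.choose k : ℝ) * ((q : ℝ) - 1)^k * f k with hM
  have huc : (univ : Finset (Fin n → F)).card = q^n := by
    rw [card_univ, Fintype.card_fun, hF, Fintype.card_fin]
  have hcc : (univ \ C).card = q^n - C.card := by
    rw [card_sdiff_of_subset (subset_univ C), huc]
  have hsplit : ∀ (D : Finset (Fin n → F)) x,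
      ∑ y ∈ univ \ D, g x y = M - ∑ y ∈ D, g x y := by
    intro D x
    rw [eq_sub_iff_add_eq, Finset.sum_sdiff (subset_univ D), row_sum hq hF]
  have hS : ∑ x ∈ univ \ C, ∑ y ∈ univ \ C, g x y
      = ∑ x ∈ C, ∑ y ∈ C, g x y + ((q:ℝ)^n - 2 * C.card) * M := by
    have cross : ∑ x ∈ univ \ C, ∑ y ∈ C, g x y
        = (C.card : ℝ) * M - ∑ x ∈ C, ∑ y ∈ C, g x y := by
      rw [Finset.sum_comm]
      calc ∑ y ∈ C, ∑ x ∈ univ \ C, g x y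
          = ∑ y ∈ C, (M - ∑ x ∈ C, g y x) := by
            refine Finset.sum_congr rfl fun y hy => ?_
            rw [← hsplit C y]
            exact Finset.sum_congr rfl fun x _ => hsym x y
        _ = (C.card : ℝ) * M - ∑ y ∈ C, ∑ x ∈ C, g y x := by
            rw [Finset.sum_sub_distrib, Finset.sum_const, nsmul_eq_mul]
        _ = (C.card : ℝ) * M - ∑ x ∈ C, ∑ y ∈ C, g x y := by rw [Finset.sum_comm]
    calc ∑ x ∈ univ \ C, ∑ y ∈ univ \ C, g x y
        = ∑ x ∈ univ \ C, (M - ∑ y ∈ C, g x y) :=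
          Finset.sum_congr rfl fun x _ => hsplit C x
      _ = ((univ \ C).card : ℝ) * M - ∑ x ∈ univ \ C, ∑ y ∈ C, g x y := by
          rw [Finset.sum_sub_distrib, Finset.sum_const, nsmul_eq_mul]
      _ = _ := by
          rw [cross, hcc]
          have : ((q^n - C.card : ℕ) : ℝ) = (q:ℝ)^n - C.card := by
            push_cast [Nat.cast_sub h1.le]; ring
          rw [this]; ring
  have hpos : (0:ℝ) < (q:ℝ)^n - C.card := by
    have : (C.card : ℝ) < (q:ℝ)^n := by exact_mod_cast h1
    linarith
  have hcpos : (0:ℝ) < (C.card : ℝ) := by exact_mod_cast h0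
  have hccR : ((univ \ C).card : ℝ) = (q:ℝ)^n - C.card := by
    rw [hcc]; push_cast [Nat.cast_sub h1.le]; ring
  unfold energy
  rw [hccR]
  rw [show ((q:ℝ)^n - C.card) * (1 / ((q:ℝ)^n - C.card) * ∑ x ∈ univ \ C, ∑ y ∈ univ \ C, g x y)
      = ∑ x ∈ univ \ C, ∑ y ∈ univ \ C, g x y by field_simp]
  rw [hS,
    show (C.card:ℝ) * (1 / (C.card:ℝ) * ∑ x ∈ C, ∑ y ∈ C, g x y)
      = ∑ x ∈ C, ∑ y ∈ C, g x y by field_simp]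

lemma opt_compl {q : ℕ} (hq : 2 ≤ q) (hF : Fintype.card F = q)
    (C : Finset (Fin n → F)) (h0 : 0 < C.card) (h1 : C.card < q^n)
    (hC : UniversallyOptimalCode C) : UniversallyOptimalCode (Finset.univ \ C) := by
  intro f hf C' hcard
  have huc : (univ : Finset (Fin n → F)).card = q^n := by
    rw [card_univ, Fintype.card_fun, hF, Fintype.card_fin]
  have hcc : (univ \ C).card = q^n - C.card := by
    rw [card_sdiff_of_subset (subset_univ C), huc]
  set D : Finset (Fin n → F) := univ \ C' with hD
  have hDcard : D.card = C.card := by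
    rw [hD, card_sdiff_of_subset (subset_univ C'), huc, hcard, hcc]
    omega
  have hE : energy f C ≤ energy f D := hC f hf D hDcard
  have hud : univ \ D = C' := by
    rw [hD, sdiff_sdiff_self_left, univ_inter]
  have hDR : (D.card : ℝ) = (C.card : ℝ) := by exact_mod_cast hDcard
  have hD0 : 0 < D.card := by omega
  have hD1 : D.card < q^n := by omega
  have idC := energy_compl hq hF C h0 h1 f
  have idD := energy_compl hq hF D hD0 hD1 f
  rw [hud, hDR] at idD
  have hpos : (0:ℝ) < (q:ℝ)^n - C.card := by
    have : (C.card : ℝ) < (q:ℝ)^n := by exact_mod_cast h1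
    linarith
  have hcnn : (0:ℝ) ≤ (C.card : ℝ) := by positivity
  have h2 : ((q:ℝ)^n - C.card) * energy f (univ \ C)
      ≤ ((q:ℝ)^n - C.card) * energy f C' := by
    rw [idC, idD]
    have := mul_le_mul_of_nonneg_left hE hcnn
    linarith
  exact le_of_mul_le_mul_left h2 hpos

end Helpers

/-- the antiparticle symmetry of Section 7: for any code
`C ⊆ F^n` with `0 < |C| < qⁿ` and any potential function `f`,
`(qⁿ − |C|)·E_f(F^n ∖ C) = |C|·E_f(C) + (qⁿ − 2|C|)·∑_{k=1}^n C(n,k)(q−1)^k f(k)`;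
in particular, `F^n ∖ C` is universally optimal iff `C` is. -/
theorem complement_energy_identity {q n : ℕ} (hq : 2 ≤ q) (hn : 1 ≤ n)
    {F : Type*} [Fintype F] [DecidableEq F] (hF : Fintype.card F = q)
    (C : Finset (Fin n → F)) (h0 : 0 < C.card) (h1 : C.card < q^n)
    (f : ℕ → ℝ) :
    ((q : ℝ)^n - C.card) * energy f (Finset.univ \ C)
        = (C.card : ℝ) * energy f C
          + ((q : ℝ)^n - 2 * C.card)
            * ∑ k ∈ Finset.Icc 1 n, (n.choose k : ℝ) * ((q : ℝ) - 1)^k * f k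
      ∧ (UniversallyOptimalCode (Finset.univ \ C) ↔ UniversallyOptimalCode C) := by
  have huc : (univ : Finset (Fin n → F)).card = q^n := by
    rw [card_univ, Fintype.card_fun, hF, Fintype.card_fin]
  have hcc : (univ \ C).card = q^n - C.card := by
    rw [card_sdiff_of_subset (subset_univ C), huc]
  refine ⟨energy_compl hq hF C h0 h1 f, ?_, opt_compl hq hF C h0 h1⟩
  intro h
  have h0' : 0 < (univ \ C).card := by omega
  have h1' : (univ \ C).card < q^n := by omega
  have := opt_compl hq hF (univ \ C) h0' h1' h
  rwa [sdiff_sdiff_self_left, univ_inter] at this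
end
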